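/- Let (X,d) be a compact metric space and f : X → X continuous. For every x ∈ X, the ω-limit set ω(x,f) is internally chain transitive. -/

import Mathlib

def InternallyChainTransitive {X : Type*} [MetricSpace X] (f : X → X) (Λ : Set X) : Prop :=
  ∀ x ∈ Λ, ∀ y ∈ Λ, ∀ ε : ℝ, 0 < ε → ∃ m : ℕ, 1 ≤ m ∧ ∃ σ : ℕ → X,
    σ 0 = x ∧ σ m = y ∧ (∀ i ≤ m, σ i ∈ Λ) ∧ ∀ i < m, dist (f (σ i)) (σ (i + 1)) < ε

def omegaLimitSet {X : Type*} [MetricSpace X] (f : X → X) (x : X) : Set X :=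
  ⋂ k : ℕ, closure ((fun n => f^[n] x) '' Set.Ici k)

open Filter Set

lemma omegaLimitSet_eq_omegaLimit {X : Type*} [MetricSpace X] (f : X → X) (x : X) :
    omegaLimitSet f x = omegaLimit Filter.atTop (fun n a => f^[n] a) ({x} : Set X) := by
  have himg : ∀ u : Set ℕ, Set.image2 (fun n a => f^[n] a) u ({x} : Set X)
      = (fun n => f^[n] x) '' u := by
    intro u
    rw [Set.image2_singleton_right]
  apply Set.Subset.antisymm
  · intro y hy
    rw [omegaLimit_def]
    simp only [Set.mem_iInter]
    intro u hu
    obtain ⟨k, hk⟩ := Filter.mem_atTop_sets.mp hu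
    have hsub : (fun n => f^[n] x) '' Set.Ici k ⊆ Set.image2 (fun n a => f^[n] a) u {x} := by
      rw [himg]
      exact Set.image_mono (fun n hn => hk n hn)
    exact closure_mono hsub (Set.mem_iInter.mp hy k)
  · intro y hy
    rw [omegaLimit_def] at hy
    simp only [Set.mem_iInter] at hy
    apply Set.mem_iInter.mpr
    intro k
    have := hy (Set.Ici k) (Filter.mem_atTop k)
    rwa [himg] at this

theorem omegaLimitSet_ict {X : Type*} [MetricSpace X] [CompactSpace X]
    (f : X → X) (hf : Continuous f) (x : X) :
    InternallyChainTransitive f (omegaLimitSet f x) := by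
  intro a ha b hb ε hε
  set Λ := omegaLimitSet f x with hΛ
  -- uniform continuity
  have huc := Metric.uniformContinuous_iff.mp (CompactSpace.uniformContinuous_of_continuous hf)
  obtain ⟨δ₀, hδ₀, hδ₀'⟩ := huc (ε / 2) (by linarith)
  set δ : ℝ := min δ₀ (ε / 2) with hδdef
  have hδ : 0 < δ := lt_min hδ₀ (by linarith)
  have hδ₁ : δ ≤ δ₀ := min_le_left _ _
  have hδ₂ : δ ≤ ε / 2 := min_le_right _ _
  -- attraction: eventually the orbit is δ-close to Λ
  have hΛne : Λ.Nonempty := ⟨a, ha⟩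
  have hopen : IsOpen (Metric.thickening δ Λ) := Metric.isOpen_thickening
  have hsub : omegaLimit Filter.atTop (fun n a => f^[n] a) ({x} : Set X)
      ⊆ Metric.thickening δ Λ := by
    rw [← omegaLimitSet_eq_omegaLimit, ← hΛ]
    exact Metric.self_subset_thickening hδ Λ
  have hev := eventually_mapsTo_of_isOpen_of_omegaLimit_subset Filter.atTop
      (fun n a => f^[n] a) ({x} : Set X) hopen hsub
  obtain ⟨K, hK⟩ := Filter.eventually_atTop.mp hev
  have hattr : ∀ n ≥ K, ∃ p ∈ Λ, dist (f^[n] x) p < δ := by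
    intro n hn
    have := hK n hn (Set.mem_singleton x)
    exact Metric.mem_thickening_iff.mp this
  -- choose n with f^[n] x near a, n ≥ K
  have haK : a ∈ closure ((fun n => f^[n] x) '' Set.Ici K) := Set.mem_iInter.mp ha K
  obtain ⟨_, ⟨n, hnK, rfl⟩, hna⟩ := Metric.mem_closure_iff.mp haK δ hδ
  have hnK' : K ≤ n := hnK
  -- choose N ≥ n+1 with f^[N] x near b
  have hbN : b ∈ closure ((fun n => f^[n] x) '' Set.Ici (n + 1)) := Set.mem_iInter.mp hb (n + 1)
  obtain ⟨_, ⟨N, hNn, rfl⟩, hNb⟩ := Metric.mem_closure_iff.mp hbN δ hδ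
  have hNn' : n + 1 ≤ N := hNn
  set m : ℕ := N - n with hm
  have hm1 : 1 ≤ m := Nat.le_sub_of_add_le (by omega)
  have hNm : N = n + m := by omega
  -- choose intermediate points
  have hchoice : ∀ i : ℕ, ∃ p, p ∈ Λ ∧ dist (f^[n + i] x) p < δ := by
    intro i
    obtain ⟨p, hp, hp'⟩ := hattr (n + i) (by omega)
    exact ⟨p, hp, hp'⟩
  choose g hg hg' using hchoice
  have hmz : m ≠ 0 := by omega
  refine ⟨m, hm1, fun i => if i = 0 then a else if i = m then b else g i, rfl, by simp [hmz], ?_, ?_⟩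
  · intro i hi
    dsimp only
    split
    · exact ha
    · split
      · exact hb
      · exact hg i
  · intro i hi
    dsimp only
    have h1 : dist (if i = 0 then a else if i = m then b else g i) (f^[n + i] x) < δ₀ := by
      split
      · subst ‹i = 0›
        simpa [dist_comm] using lt_of_lt_of_le hna hδ₁
      · have : i ≠ m := by omega
        simp only [this, if_false]
        exact lt_of_lt_of_le (by simpa [dist_comm] using hg' i) hδ₁
    have h2 : dist (f^[n + i + 1] x) (if i + 1 = 0 then a else if i + 1 = m then b else g (i + 1)) < δ := by
      split
      · omega
      · split
        · have : N = n + i + 1 := by omega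
          rw [← this]
          simpa [dist_comm] using hNb
        · exact hg' (i + 1)
    have hstep : dist (f (if i = 0 then a else if i = m then b else g i)) (f (f^[n + i] x)) < ε / 2 :=
      hδ₀' h1
    have hiter : f (f^[n + i] x) = f^[n + i + 1] x := (Function.iterate_succ_apply' f (n + i) x).symm
    calc dist (f (if i = 0 then a else if i = m then b else g i))
          (if i + 1 = 0 then a else if i + 1 = m then b else g (i + 1))
        ≤ dist (f (if i = 0 then a else if i = m then b else g i)) (f^[n + i + 1] x)
          + dist (f^[n + i + 1] x) (if i + 1 = 0 then a else if i + 1 = m then b else g (i + 1)) :=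
          dist_triangle _ _ _
      _ < ε / 2 + δ := by
          refine add_lt_add ?_ h2
          rw [← hiter]; exact hstep
      _ ≤ ε := by linarith
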